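/- For every α ∈ (0,1) and every instance, the Rightmost-of-α-Leftmost mechanism satisfies, in the case where the winner w and an optimal alternative o satisfy w < o: max-of-average cost of w is at most (2/α - 1) times the max-of-average cost of o. -/

import Mathlib

lemma aux_sum_bound (l : List ℝ) (K : ℕ) (w o : ℝ) (hwo : w < o)
    (hK1 : 1 ≤ K) (hKl : K ≤ l.length)
    (hhalf : ∀ a ∈ l.take K, a ≤ (w + o) / 2) :
    (l.map (fun a => |a - w|)).sum ≤
      (2 * l.length / K - 1) * (l.map (fun a => |a - o|)).sum := by
  have hK0 : (0:ℝ) < K := by positivity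
  set L := l.take K with hL
  set R := l.drop K with hR
  have hLlen : L.length = K := by
    simp [hL, Nat.min_eq_left hKl]
  have hRlen : (R.length : ℝ) = (l.length : ℝ) - K := by
    rw [hR, List.length_drop, Nat.cast_sub hKl]
  -- pointwise facts on L
  have h1 : ∀ a ∈ L, |a - w| ≤ |a - o| := by
    intro a ha
    have h := hhalf a ha
    have hao : |a - o| = o - a := by
      rw [abs_of_nonpos (by linarith)]; ring
    rw [hao]
    rw [abs_le]; constructor <;> linarith
  have h2 : ∀ a ∈ L, (o - w) / 2 ≤ |a - o| := by
    intro a ha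
    have h := hhalf a ha
    have hao : |a - o| = o - a := by
      rw [abs_of_nonpos (by linarith)]; ring
    rw [hao]; linarith
  -- sums
  have hsplit : l = L ++ R := (List.take_append_drop K l).symm
  have hSw : (l.map (fun a => |a - w|)).sum
      = (L.map (fun a => |a - w|)).sum + (R.map (fun a => |a - w|)).sum := by
    rw [hsplit]; simp
  have hSo : (l.map (fun a => |a - o|)).sum
      = (L.map (fun a => |a - o|)).sum + (R.map (fun a => |a - o|)).sum := by
    rw [hsplit]; simp
  have hsumL : (L.map (fun a => |a - w|)).sum ≤ (L.map (fun a => |a - o|)).sum :=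
    List.sum_le_sum h1
  have hsumL2 : (K : ℝ) * ((o - w) / 2) ≤ (L.map (fun a => |a - o|)).sum := by
    have : ((L.map (fun _ => (o - w) / 2)).sum : ℝ) ≤ (L.map (fun a => |a - o|)).sum :=
      List.sum_le_sum h2
    simpa [List.map_const', List.sum_replicate, hLlen, nsmul_eq_mul] using this
  have hsumR : (R.map (fun a => |a - w|)).sum
      ≤ (R.map (fun a => |a - o|)).sum + (R.length : ℝ) * (o - w) := by
    have step : (R.map (fun a => |a - w|)).sum
        ≤ (R.map (fun a => |a - o| + (o - w))).sum := by
      apply List.sum_le_sum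
      intro a _
      have t := abs_sub_abs_le_abs_sub (a - w) (a - o)
      have h2 : |a - w - (a - o)| = o - w := by
        rw [show a - w - (a - o) = o - w by ring, abs_of_pos (by linarith)]
      linarith
    have const : (R.map (fun _ : ℝ => (o - w))).sum = (R.length : ℝ) * (o - w) := by
      simp [List.map_const', List.sum_replicate, nsmul_eq_mul]
    calc (R.map (fun a => |a - w|)).sum ≤ (R.map (fun a => |a - o| + (o - w))).sum := step
      _ = (R.map (fun a => |a - o|)).sum + (R.map (fun _ : ℝ => (o - w))).sum :=
          List.sum_map_add
      _ = (R.map (fun a => |a - o|)).sum + (R.length : ℝ) * (o - w) := by rw [const]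
  have hRnonneg : (0:ℝ) ≤ (R.map (fun a => |a - o|)).sum :=
    List.sum_nonneg (by intro a ha; simp at ha; obtain ⟨b, _, rfl⟩ := ha; positivity)
  have hmK : (0:ℝ) ≤ (l.length : ℝ) - K := by
    have := hKl; push_cast; exact sub_nonneg.mpr (by exact_mod_cast this)
  rw [hRlen] at hsumR
  set SL := (L.map (fun a => |a - o|)).sum
  set SR := (R.map (fun a => |a - o|)).sum
  set SwL := (L.map (fun a => |a - w|)).sum
  set SwR := (R.map (fun a => |a - w|)).sum
  rw [hSw, hSo]
  set M := (l.length : ℝ)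
  have e : (2 * M / K - 1) * (SL + SR) = ((2 * M - K) * (SL + SR)) / K := by
    field_simp
  rw [e, le_div_iff₀ hK0]
  nlinarith [mul_le_mul_of_nonneg_left hsumL2 hmK, mul_nonneg hmK hRnonneg,
    mul_le_mul_of_nonneg_left hsumL hK0.le, mul_le_mul_of_nonneg_left hsumR hK0.le]

theorem stmt_14 (k : ℕ) (A : Finset ℝ)
    (n : Fin (k + 1) → ℕ) (p : (d : Fin (k + 1)) → Fin (n d + 1) → ℝ)
    (α : ℝ) (h0 : 0 < α) (h1 : α < 1)
    (x : Fin (k + 1) → ℝ)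
    (hx : ∀ d, (Multiset.sort
        (Multiset.map (p d) (Finset.univ : Finset (Fin (n d + 1))).val) (· ≤ ·))[⌈α * (n d + 1 : ℕ)⌉₊ - 1]?
      = some (x d))
    (y : Fin (k + 1) → ℝ)
    (hy : ∀ d, y d ∈ A ∧ ∀ a ∈ A, |x d - y d| ≤ |x d - a|)
    (w : ℝ) (hw : w = Finset.univ.sup' Finset.univ_nonempty y)
    (o : ℝ) (ho : o ∈ A) (hwo : w < o) :
    Finset.univ.sup' Finset.univ_nonempty
        (fun d => (1 / (n d + 1 : ℕ) : ℝ) * ∑ i, |p d i - w|) ≤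
      (2 / α - 1) *
        Finset.univ.sup' Finset.univ_nonempty
          (fun d => (1 / (n d + 1 : ℕ) : ℝ) * ∑ i, |p d i - o|) := by
  obtain ⟨d, -, hd⟩ := Finset.exists_mem_eq_sup' Finset.univ_nonempty
    (fun d => (1 / (n d + 1 : ℕ) : ℝ) * ∑ i, |p d i - w|)
  rw [hd]
  set m : ℕ := n d + 1 with hm
  set l : List ℝ := Multiset.sort
    (Multiset.map (p d) (Finset.univ : Finset (Fin (n d + 1))).val) (· ≤ ·) with hl
  set K : ℕ := ⌈α * (m : ℕ)⌉₊ with hK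
  have hlen : l.length = m := by
    simp [hl, Multiset.length_sort, m]
  have hK1 : 1 ≤ K := by
    rw [hK, Nat.one_le_ceil_iff]
    positivity
  obtain ⟨hKlt0, hxval0⟩ := List.getElem?_eq_some_iff.mp (hx d)
  have hKlt : K - 1 < l.length := hKlt0
  have hxval : l[K - 1]'hKlt = x d := hxval0
  have hKl : K ≤ l.length := by omega
  have hαK : α * m ≤ K := Nat.le_ceil _
  have hyw : y d ≤ w := by rw [hw]; exact Finset.le_sup' y (Finset.mem_univ d)
  have hxo : |x d - y d| ≤ |x d - o| := (hy d).2 o ho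
  have hxhalf : x d ≤ (w + o) / 2 := by
    rcases abs_cases (x d - y d) with ⟨e1, _⟩ | ⟨e1, _⟩ <;>
      rcases abs_cases (x d - o) with ⟨e2, _⟩ | ⟨e2, _⟩ <;> linarith [hxo]
  -- sorted facts
  have hsorted : l.Pairwise (· ≤ ·) := Multiset.pairwise_sort _ _
  have hhalf : ∀ a ∈ l.take K, a ≤ (w + o) / 2 := by
    intro a ha
    obtain ⟨j, hj, rfl⟩ := List.mem_iff_getElem.mp ha
    have hjK : j < K := lt_of_lt_of_le hj (by simp [List.length_take])
    rw [List.getElem_take]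
    have hax : l[j] ≤ x d := by
      rcases eq_or_lt_of_le (Nat.le_pred_of_lt hjK) with hjj | hjj
      · rw [← hxval]
        have : j = K - 1 := hjj
        subst this; exact le_refl _
      · rw [← hxval]
        exact (List.pairwise_iff_getElem.mp hsorted) j (K-1) (by omega) hKlt hjj
    linarith
  -- sum conversion
  have hconv : ∀ z : ℝ, (∑ i, |p d i - z|) = (l.map (fun a => |a - z|)).sum := by
    intro z
    have h2 : ((l : Multiset ℝ)) = Multiset.map (p d) (Finset.univ : Finset (Fin (n d + 1))).val :=
      Multiset.sort_eq _ _
    calc (∑ i, |p d i - z|)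
        = (Multiset.map (fun a => |a - z|) (Multiset.map (p d)
            (Finset.univ : Finset (Fin (n d + 1))).val)).sum := by
          rw [Multiset.map_map]; rfl
      _ = (Multiset.map (fun a => |a - z|) (l : Multiset ℝ)).sum := by rw [h2]
      _ = (l.map (fun a => |a - z|)).sum := by rw [Multiset.map_coe, Multiset.sum_coe]
  have key := aux_sum_bound l K w o hwo hK1 hKl hhalf
  rw [hconv w]
  have hm0 : (0:ℝ) < m := by positivity
  have hK0 : (0:ℝ) < K := by positivity
  have hSo_nonneg : (0:ℝ) ≤ (l.map (fun a => |a - o|)).sum :=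
    List.sum_nonneg (by intro a ha; simp at ha; obtain ⟨b, _, rfl⟩ := ha; positivity)
  have hcoef : (2 * (l.length : ℝ) / K - 1) ≤ 2 / α - 1 := by
    rw [hlen]
    have h1 : (m:ℝ) / K ≤ 1 / α := by
      rw [div_le_div_iff₀ hK0 h0]
      nlinarith
    have e1 : 2 * (m:ℝ) / K = 2 * ((m:ℝ)/K) := by ring
    have e2 : 2 / α = 2 * (1/α) := by ring
    rw [e1, e2]
    linarith
  have step1 : (1 / (m:ℕ) : ℝ) * (l.map (fun a => |a - w|)).sum
      ≤ (2 / α - 1) * ((1 / (m:ℕ) : ℝ) * (l.map (fun a => |a - o|)).sum) := by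
    have h2 : (l.map (fun a => |a - w|)).sum ≤ (2/α - 1) * (l.map (fun a => |a - o|)).sum :=
      le_trans key (mul_le_mul_of_nonneg_right hcoef hSo_nonneg)
    have hinv : (0:ℝ) ≤ 1 / (m:ℕ) := by positivity
    calc (1 / (m:ℕ) : ℝ) * (l.map (fun a => |a - w|)).sum
        ≤ (1 / (m:ℕ) : ℝ) * ((2/α - 1) * (l.map (fun a => |a - o|)).sum) :=
          mul_le_mul_of_nonneg_left h2 hinv
      _ = (2 / α - 1) * ((1 / (m:ℕ) : ℝ) * (l.map (fun a => |a - o|)).sum) := by ring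
  refine le_trans step1 ?_
  have hα2 : (0:ℝ) ≤ 2/α - 1 := by
    have : (1:ℝ) ≤ 2/α := by rw [le_div_iff₀ h0]; linarith
    linarith
  apply mul_le_mul_of_nonneg_left _ hα2
  rw [← hconv o]
  exact Finset.le_sup' (fun d => (1 / (n d + 1 : ℕ) : ℝ) * ∑ i, |p d i - o|)
    (Finset.mem_univ d)
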